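/- If the optimal reward is strictly positive, i.e. max_{s ∈ {1,...,M+1}} E(s) > 0, then the set of optimal thresholds { s ∈ {1,...,M+1} : E(s) ≥ E(t) for all t ∈ {1,...,M+1} } has at most two elements. -/

import Mathlib

open Finset

/-- Expected average reward `E(s)` of the threshold-`s` policy, for `1 ≤ s ≤ M`;
`E(M+1) = 0` corresponds to the always-inactive policy. -/
noncomputable def Ereward (M : ℕ) (p G P B : ℝ) (U : ℕ → ℝ) (s : ℕ) : ℝ :=
  if s = M + 1 then 0
  else ((s : ℝ) + (1 - p) / p)⁻¹ *
    ((∑ x ∈ Finset.Icc 1 (s - 1), U x)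
      + (∑ i ∈ Finset.range (M - s), U (s + i) * (1 - p) ^ i)
      - G / p - P + B)

namespace ATTO

noncomputable def Nv (M : ℕ) (p G P B : ℝ) (U : ℕ → ℝ) (s : ℕ) : ℝ :=
  (∑ x ∈ Finset.Icc 1 (s - 1), U x)
    + (∑ i ∈ Finset.range (M - s), U (s + i) * (1 - p) ^ i) - G / p - P + B

noncomputable def Tv (M : ℕ) (p : ℝ) (U : ℕ → ℝ) (s : ℕ) : ℝ :=
  ∑ i ∈ Finset.range (M - s - 1), U (s + 1 + i) * (1 - p) ^ i

noncomputable def gv (M : ℕ) (p G P B : ℝ) (U : ℕ → ℝ) (s : ℕ) : ℝ :=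
  ((s : ℝ) + (1 - p) / p) * (p * Tv M p U s) - Nv M p G P B U s

lemma Ereward_eq (M : ℕ) (p G P B : ℝ) (U : ℕ → ℝ) (s : ℕ) (hs : s ≠ M + 1) :
    Ereward M p G P B U s = ((s : ℝ) + (1 - p) / p)⁻¹ * Nv M p G P B U s := by
  rw [Ereward, if_neg hs, Nv]

lemma Nv_succ (M : ℕ) (p G P B : ℝ) (U : ℕ → ℝ) (s : ℕ) (hs1 : 1 ≤ s) (hsM : s < M) :
    Nv M p G P B U (s + 1) = Nv M p G P B U s + p * Tv M p U s := by
  obtain ⟨k, rfl⟩ : ∃ k, s = k + 1 := ⟨s - 1, by omega⟩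
  obtain ⟨n, hn⟩ : ∃ n, M - (k + 1) = n + 1 := ⟨M - (k + 1) - 1, by omega⟩
  have hn2 : M - (k + 1 + 1) = n := by omega
  have hn3 : M - (k + 1) - 1 = n := by omega
  have h1 : ∑ x ∈ Finset.Icc 1 (k + 1 + 1 - 1), U x
      = (∑ x ∈ Finset.Icc 1 (k + 1 - 1), U x) + U (k + 1) := by
    simp only [Nat.add_sub_cancel]
    exact Finset.sum_Icc_succ_top (by omega) U
  have h2 : ∑ i ∈ Finset.range (M - (k + 1)), U (k + 1 + i) * (1 - p) ^ i
      = U (k + 1) + (1 - p) * ∑ i ∈ Finset.range n, U (k + 1 + 1 + i) * (1 - p) ^ i := by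
    rw [hn, Finset.sum_range_succ']
    simp only [pow_zero, mul_one, add_zero]
    rw [add_comm, Finset.mul_sum]
    congr 1
    apply Finset.sum_congr rfl
    intro i _
    have h : k + 1 + (i + 1) = k + 1 + 1 + i := by omega
    rw [h]; ring
  rw [Nv, Nv, Tv, h1, hn2, hn3, h2]
  ring

lemma Tv_rec (M : ℕ) (p : ℝ) (U : ℕ → ℝ) (s : ℕ) (h : s + 1 < M) :
    Tv M p U s = U (s + 1) + (1 - p) * Tv M p U (s + 1) := by
  obtain ⟨n, hn⟩ : ∃ n, M - s - 1 = n + 1 := ⟨M - s - 2, by omega⟩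
  have hn2 : M - (s + 1) - 1 = n := by omega
  rw [Tv, Tv, hn, hn2, Finset.sum_range_succ']
  simp only [pow_zero, mul_one, add_zero]
  rw [add_comm, Finset.mul_sum]
  congr 1
  apply Finset.sum_congr rfl
  intro i _
  have h' : s + 1 + (i + 1) = s + 1 + 1 + i := by omega
  rw [h']; ring

section Hyp

variable {M : ℕ} {p G P B : ℝ} {U : ℕ → ℝ}
variable (hp : 0 < p) (hp1 : p < 1)
variable (hU : ∀ ⦃x y : ℕ⦄, 1 ≤ x → x ≤ y → y ≤ M → U y ≤ U x)
variable (hUM : U M = 0)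

include hU hUM in
lemma U_nonneg {x : ℕ} (hx : 1 ≤ x) (hxM : x ≤ M) : 0 ≤ U x := by
  have := hU hx hxM le_rfl
  linarith [this, hUM ▸ this]

include hp1 hU hUM in
lemma Tv_nonneg (s : ℕ) (hs : 1 ≤ s) : 0 ≤ Tv M p U s := by
  apply Finset.sum_nonneg
  intro i hi
  rw [Finset.mem_range] at hi
  have h1 : 0 ≤ U (s + 1 + i) := U_nonneg hU hUM (by omega) (by omega)
  have h2 : (0:ℝ) ≤ (1 - p) ^ i := pow_nonneg (by linarith) i
  positivity

include hp hp1 hU hUM in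
lemma pT_le (s : ℕ) (hs1 : 1 ≤ s) (hsM : s < M) :
    p * Tv M p U s ≤ U (s + 1) * (1 - (1 - p) ^ (M - s - 1)) := by
  have h1 : Tv M p U s ≤ U (s + 1) * ∑ i ∈ Finset.range (M - s - 1), (1 - p) ^ i := by
    rw [Finset.mul_sum, Tv]
    apply Finset.sum_le_sum
    intro i hi
    rw [Finset.mem_range] at hi
    have h : U (s + 1 + i) ≤ U (s + 1) := hU (by omega) (by omega) (by omega)
    exact mul_le_mul_of_nonneg_right h (pow_nonneg (by linarith) i)
  have hgeo : ∑ i ∈ Finset.range (M - s - 1), (1 - p) ^ i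
      = (1 - (1 - p) ^ (M - s - 1)) / p := by
    rw [geom_sum_eq (by intro h; rw [sub_eq_iff_eq_add] at h; linarith : (1:ℝ) - p ≠ 1)]
    have hp' : p ≠ 0 := ne_of_gt hp
    field_simp
    rw [show (1:ℝ) - p - 1 = -p by ring, mul_div_right_comm, div_neg, div_self hp']
    ring
  rw [hgeo] at h1
  have := mul_le_mul_of_nonneg_left h1 hp.le
  calc p * Tv M p U s ≤ p * (U (s + 1) * ((1 - (1 - p) ^ (M - s - 1)) / p)) := this
    _ = U (s + 1) * (1 - (1 - p) ^ (M - s - 1)) := by field_simp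

include hp hp1 hU hUM in
lemma pT_lt (s : ℕ) (hs1 : 1 ≤ s) (hsM : s < M) (hT : 0 < Tv M p U s) :
    p * Tv M p U s < U (s + 1) := by
  have hq : (0:ℝ) < (1 - p) ^ (M - s - 1) := pow_pos (by linarith) _
  have hq1 : (1 - p) ^ (M - s - 1) ≤ 1 := pow_le_one₀ (by linarith) (by linarith)
  have h := pT_le hp hp1 hU hUM s hs1 hsM
  have hU1 : 0 < U (s + 1) := by
    by_contra h'
    push_neg at h'
    nlinarith
  nlinarith

include hp hp1 hU hUM in
lemma Tv_antitone (s : ℕ) (hs1 : 1 ≤ s) (hsM : s + 1 ≤ M) :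
    Tv M p U (s + 1) ≤ Tv M p U s := by
  rcases eq_or_lt_of_le hsM with h | h
  · have h0 : Tv M p U (s + 1) = 0 := by
      rw [Tv]
      have : M - (s + 1) - 1 = 0 := by omega
      rw [this]; simp
    rw [h0]; exact Tv_nonneg hp1 hU hUM s hs1
  · have hrec := Tv_rec M p U s h
    have hle := pT_le hp hp1 hU hUM (s + 1) (by omega) (by omega)
    have hq : (0:ℝ) ≤ (1 - p) ^ (M - (s + 1) - 1) := pow_nonneg (by linarith) _
    have hU2 : 0 ≤ U (s + 1 + 1) := U_nonneg hU hUM (by omega) (by omega)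
    have hU12 : U (s + 1 + 1) ≤ U (s + 1) := hU (by omega) (by omega) (by omega)
    nlinarith

include hp hp1 hU hUM in
lemma Tv_strict (s : ℕ) (hs1 : 1 ≤ s) (hsM : s < M) (hT : 0 < Tv M p U s) :
    Tv M p U (s + 1) < Tv M p U s := by
  rcases eq_or_lt_of_le (by omega : s + 1 ≤ M) with h | h
  · have h0 : Tv M p U (s + 1) = 0 := by
      rw [Tv]
      have : M - (s + 1) - 1 = 0 := by omega
      rw [this]; simp
    rw [h0]; exact hT
  · have hrec := Tv_rec M p U s h
    rcases le_or_gt (Tv M p U (s + 1)) 0 with h' | h'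
    · linarith
    · have hlt := pT_lt hp hp1 hU hUM (s + 1) (by omega) (by omega) h'
      have hU12 : U (s + 1 + 1) ≤ U (s + 1) := hU (by omega) (by omega) (by omega)
      nlinarith

include hp hp1 in
lemma Ediff (s : ℕ) (hs1 : 1 ≤ s) (hsM : s < M) :
    Ereward M p G P B U (s + 1) - Ereward M p G P B U s
      = gv M p G P B U s / ((((s:ℝ)) + (1 - p) / p) * (((s:ℝ)) + 1 + (1 - p) / p)) := by
  have hc : 0 < (1 - p) / p := div_pos (by linarith) hp
  have hd1 : (0:ℝ) < (s : ℝ) + (1 - p) / p := by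
    have : (0:ℝ) ≤ (s:ℝ) := Nat.cast_nonneg s
    linarith
  have hd2 : (0:ℝ) < (s : ℝ) + 1 + (1 - p) / p := by linarith
  rw [Ereward_eq M p G P B U (s + 1) (by omega), Ereward_eq M p G P B U s (by omega),
    Nv_succ M p G P B U s hs1 hsM, gv]
  push_cast
  rw [inv_mul_eq_div, inv_mul_eq_div, div_sub_div _ _ hd2.ne' hd1.ne',
    div_eq_div_iff (mul_ne_zero hd2.ne' hd1.ne') (mul_ne_zero hd1.ne' hd2.ne')]
  ring

include hp hp1 hU hUM in
lemma g_step (s : ℕ) (hs1 : 1 ≤ s) (hsM : s + 1 ≤ M) :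
    gv M p G P B U (s + 1) ≤ gv M p G P B U s := by
  have hT := Tv_antitone hp hp1 hU hUM s hs1 hsM
  have hc : 0 < (1 - p) / p := div_pos (by linarith) hp
  have hd : (0:ℝ) < ((s:ℝ) + 1) + (1 - p) / p := by
    have : (0:ℝ) ≤ (s:ℝ) := Nat.cast_nonneg s
    linarith
  rw [gv, gv, Nv_succ M p G P B U s hs1 (by omega)]
  push_cast
  nlinarith [mul_le_mul_of_nonneg_left hT (mul_pos hp hd).le]

include hp hp1 hU hUM in
lemma g_step_strict (s : ℕ) (hs1 : 1 ≤ s) (hsM : s + 1 ≤ M) (hT : 0 < Tv M p U s) :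
    gv M p G P B U (s + 1) < gv M p G P B U s := by
  have hTs := Tv_strict hp hp1 hU hUM s hs1 (by omega) hT
  have hc : 0 < (1 - p) / p := div_pos (by linarith) hp
  have hd : (0:ℝ) < ((s:ℝ) + 1) + (1 - p) / p := by
    have : (0:ℝ) ≤ (s:ℝ) := Nat.cast_nonneg s
    linarith
  rw [gv, gv, Nv_succ M p G P B U s hs1 (by omega)]
  push_cast
  nlinarith [mul_lt_mul_of_pos_left hTs (mul_pos hp hd)]

end Hyp
end ATTO
open ATTO

/-- If the optimal reward is strictly positive, then there are at most two optimal
thresholds. -/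
theorem at_most_two_optimal_thresholds (M : ℕ) (p G P B : ℝ) (U : ℕ → ℝ)
    (hM : 2 ≤ M) (hp : 0 < p) (hp1 : p < 1)
    (hU : ∀ ⦃x y : ℕ⦄, 1 ≤ x → x ≤ y → y ≤ M → U y ≤ U x)
    (hUM : U M = 0)
    (hpos : ∃ s ∈ Set.Icc 1 (M + 1), 0 < Ereward M p G P B U s) :
    {s : ℕ | s ∈ Set.Icc 1 (M + 1) ∧
      ∀ t ∈ Set.Icc 1 (M + 1),
        Ereward M p G P B U t ≤ Ereward M p G P B U s}.ncard ≤ 2 := by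
  classical
  set S : Set ℕ := {s : ℕ | s ∈ Set.Icc 1 (M + 1) ∧
      ∀ t ∈ Set.Icc 1 (M + 1), Ereward M p G P B U t ≤ Ereward M p G P B U s} with hS
  have hc : 0 < (1 - p) / p := div_pos (by linarith) hp
  obtain ⟨a0, ha0mem, ha0max⟩ :=
    Finset.exists_max_image (Finset.Icc 1 (M + 1)) (Ereward M p G P B U) ⟨1, by simp⟩
  have ha0S : a0 ∈ S := by
    rw [Finset.mem_Icc] at ha0mem
    refine ⟨⟨ha0mem.1, ha0mem.2⟩, fun t ht => ha0max t ?_⟩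
    rw [Finset.mem_Icc]; exact ⟨ht.1, ht.2⟩
  have hSne : S.Nonempty := ⟨a0, ha0S⟩
  set a := sInf S with haDef
  have haS : a ∈ S := Nat.sInf_mem hSne
  have hamin : ∀ b ∈ S, a ≤ b := fun b hb => Nat.sInf_le hb
  obtain ⟨s0, hs0mem, hs0pos⟩ := hpos
  have hmpos : 0 < Ereward M p G P B U a := lt_of_lt_of_le hs0pos (haS.2 s0 hs0mem)
  have ha1 : 1 ≤ a := haS.1.1
  have hle_M : ∀ b ∈ S, b ≤ M := by
    intro b hb
    by_contra h'
    have hbM1 : b = M + 1 := by have := hb.1.2; omega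
    have h0 : Ereward M p G P B U b = 0 := by rw [hbM1, Ereward, if_pos rfl]
    have := hb.2 s0 hs0mem
    rw [h0] at this
    linarith
  have hdpos : ∀ s : ℕ, (0:ℝ) <
      (((s:ℝ)) + (1 - p) / p) * (((s:ℝ)) + 1 + (1 - p) / p) := by
    intro s
    have h0 : (0:ℝ) ≤ (s:ℝ) := Nat.cast_nonneg s
    have h1 : (0:ℝ) < (s:ℝ) + (1 - p) / p := by linarith
    nlinarith
  have hsub : S ⊆ {a, a + 1} := by
    intro b hb
    simp only [Set.mem_insert_iff, Set.mem_singleton_iff]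
    by_contra hne
    push_neg at hne
    have hab : a + 2 ≤ b := by
      have := hamin b hb
      omega
    have hbM : b ≤ M := hle_M b hb
    have haM2 : a + 2 ≤ M := le_trans hab hbM
    have haM : a < M := by omega
    have hEb : Ereward M p G P B U b = Ereward M p G P B U a :=
      le_antisymm (haS.2 b hb.1) (hb.2 a haS.1)
    have hEa1le : Ereward M p G P B U (a + 1) ≤ Ereward M p G P B U a :=
      haS.2 (a + 1) ⟨by omega, by omega⟩
    -- g a ≤ 0
    have hga : gv M p G P B U a ≤ 0 := by
      have h := Ediff (M := M) (G := G) (P := P) (B := B) (U := U) hp hp1 a ha1 haM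
      have hd := hdpos a
      have hdiv : gv M p G P B U a /
          ((((a:ℝ)) + (1 - p) / p) * (((a:ℝ)) + 1 + (1 - p) / p)) ≤ 0 := by
        rw [← h]; linarith
      rcases div_nonpos_iff.mp hdiv with ⟨_, h2⟩ | ⟨h1, _⟩
      · linarith
      · exact h1
    -- g stays ≤ 0 after a
    have hgle : ∀ n, a + n ≤ M → gv M p G P B U (a + n) ≤ 0 := by
      intro n
      induction n with
      | zero => intro _; simpa using hga
      | succ n ih =>
        intro h
        have h1 := ih (by omega)
        have h2 := g_step (M := M) (G := G) (P := P) (B := B) (U := U)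
          hp hp1 hU hUM (a + n) (by omega) (by omega)
        have he : a + (n + 1) = (a + n) + 1 := by omega
        rw [he]
        linarith
    -- E is nonincreasing after a
    have hEstep : ∀ t, a ≤ t → t < M →
        Ereward M p G P B U (t + 1) ≤ Ereward M p G P B U t := by
      intro t hat htM
      have h := Ediff (M := M) (G := G) (P := P) (B := B) (U := U) hp hp1 t
        (by omega) htM
      have hg : gv M p G P B U (a + (t - a)) ≤ 0 := hgle (t - a) (by omega)
      rw [show a + (t - a) = t by omega] at hg
      have hd := hdpos t
      have hdiv : gv M p G P B U t /
          ((((t:ℝ)) + (1 - p) / p) * (((t:ℝ)) + 1 + (1 - p) / p)) ≤ 0 :=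
        div_nonpos_iff.mpr (Or.inr ⟨hg, hd.le⟩)
      linarith
    have hEchain : ∀ r n, a ≤ r → r + n ≤ M →
        Ereward M p G P B U (r + n) ≤ Ereward M p G P B U r := by
      intro r n har
      induction n with
      | zero => intro _; simp
      | succ n ih =>
        intro h
        have h1 := ih (by omega)
        have h2 := hEstep (r + n) (by omega) (by omega)
        have he : r + (n + 1) = (r + n) + 1 := by omega
        rw [he]
        linarith
    -- E (a+1) = E a
    have hEbto : Ereward M p G P B U b ≤ Ereward M p G P B U (a + 1) := by
      have := hEchain (a + 1) (b - (a + 1)) (by omega) (by omega)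
      rwa [show a + 1 + (b - (a + 1)) = b by omega] at this
    have hEa1 : Ereward M p G P B U (a + 1) = Ereward M p G P B U a :=
      le_antisymm hEa1le (hEb ▸ hEbto)
    -- g a = 0
    have hga0 : gv M p G P B U a = 0 := by
      have h := Ediff (M := M) (G := G) (P := P) (B := B) (U := U) hp hp1 a ha1 haM
      have hd := hdpos a
      have hdiv : gv M p G P B U a /
          ((((a:ℝ)) + (1 - p) / p) * (((a:ℝ)) + 1 + (1 - p) / p)) = 0 := by
        rw [← h, hEa1]; ring
      rcases div_eq_zero_iff.mp hdiv with h1 | h2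
      · exact h1
      · exact absurd h2 hd.ne'
    -- T a > 0
    have hd1 : (0:ℝ) < (a:ℝ) + (1 - p) / p := by
      have : (0:ℝ) ≤ (a:ℝ) := Nat.cast_nonneg a
      linarith
    have hNa : Nv M p G P B U a = ((a:ℝ) + (1 - p) / p) * Ereward M p G P B U a := by
      rw [Ereward_eq M p G P B U a (by omega), ← mul_assoc, mul_inv_cancel₀ hd1.ne',
        one_mul]
    have hTa : 0 < Tv M p U a := by
      rw [gv, hNa] at hga0
      have hpt : p * Tv M p U a = Ereward M p G P B U a := by
        have h := hga0
        have := hd1.ne'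
        field_simp at h
        rcases mul_eq_zero.mp (by linarith [h] : (((a:ℝ)) + (1 - p) / p) *
            (p * Tv M p U a - Ereward M p G P B U a) = 0) with h1 | h2
        · exact absurd h1 hd1.ne'
        · linarith
      nlinarith
    -- strict decrease
    have hTstrict : Tv M p U (a + 1) < Tv M p U a :=
      Tv_strict hp hp1 hU hUM a ha1 haM hTa
    have hga1 : gv M p G P B U (a + 1) < 0 := by
      have := g_step_strict (M := M) (G := G) (P := P) (B := B) (U := U)
        hp hp1 hU hUM a ha1 (by omega) hTa
      linarith
    have hE2lt : Ereward M p G P B U (a + 1 + 1) < Ereward M p G P B U (a + 1) := by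
      have h := Ediff (M := M) (G := G) (P := P) (B := B) (U := U) hp hp1 (a + 1)
        (by omega) (by omega)
      have hd := hdpos (a + 1)
      have hdiv : gv M p G P B U (a + 1) /
          ((((a + 1 : ℕ):ℝ)) + (1 - p) / p) /
          (((((a + 1 : ℕ):ℝ)) + 1 + (1 - p) / p)) < 0 := by
        rw [div_div]
        exact div_neg_of_neg_of_pos hga1 hd
      rw [div_div] at hdiv
      linarith
    have hEb2 : Ereward M p G P B U b ≤ Ereward M p G P B U (a + 1 + 1) := by
      have := hEchain (a + 1 + 1) (b - (a + 2)) (by omega) (by omega)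
      rwa [show a + 1 + 1 + (b - (a + 2)) = b by omega] at this
    linarith
  calc S.ncard ≤ ({a, a + 1} : Set ℕ).ncard :=
        Set.ncard_le_ncard hsub ((Set.finite_singleton (a + 1)).insert a)
    _ ≤ ({a + 1} : Set ℕ).ncard + 1 := Set.ncard_insert_le a {a + 1}
    _ ≤ 2 := by rw [Set.ncard_singleton]
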